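/- Every nonzero submodule of a nonzero comultiplication module contains a minimal submodule; in particular, the set of minimal submodules is nonempty. -/
import Mathlib


/-- `M` is a comultiplication `R`-module: every submodule is of the form `(0 :_M I)`. -/
def IsComultiplication (R M : Type*) [CommRing R] [AddCommGroup M] [Module R M] : Prop :=
  ∀ N : Submodule R M, ∃ I : Ideal R, ∀ m : M, m ∈ N ↔ ∀ r ∈ I, r • m = 0

/-- A submodule is large (essential) if it meets every nonzero submodule nontrivially. -/
def IsLarge {R M : Type*} [CommRing R] [AddCommGroup M] [Module R M]
    (N : Submodule R M) : Prop :=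
  ∀ L : Submodule R M, L ≠ ⊥ → N ⊓ L ≠ ⊥

theorem key_aux {R M : Type*} [CommRing R] [AddCommGroup M] [Module R M]
    (hc : IsComultiplication R M) (N : Submodule R M) (hN : N ≠ ⊥) :
    ∃ S : Submodule R M, IsAtom S ∧ S ≤ N := by
  obtain ⟨x, hxN, hx0⟩ := Submodule.exists_mem_ne_zero_of_ne_bot hN
  -- annihilator of x
  set A : Ideal R := LinearMap.ker (LinearMap.toSpanSingleton R M x) with hA
  have hAne : A ≠ ⊤ := by
    intro h
    have : (1 : R) ∈ A := h ▸ Submodule.mem_top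
    simp only [hA, LinearMap.mem_ker, LinearMap.toSpanSingleton_apply, one_smul] at this
    exact hx0 this
  obtain ⟨P, hPmax, hAP⟩ := Ideal.exists_le_maximal A hAne
  -- Px
  set Px : Submodule R M := Submodule.map (LinearMap.toSpanSingleton R M x) P with hPx
  have hxPx : x ∉ Px := by
    rintro hmem
    obtain ⟨p, hp, hpx⟩ := Submodule.mem_map.mp hmem
    simp only [LinearMap.toSpanSingleton_apply] at hpx
    have h1p : (1 : R) - p ∈ A := by
      simp only [hA, LinearMap.mem_ker, LinearMap.toSpanSingleton_apply, sub_smul, one_smul,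
        hpx, sub_self]
    have : (1 : R) ∈ P := by
      have := P.add_mem (hAP h1p) hp
      simpa using this
    exact hPmax.ne_top (Ideal.eq_top_of_isUnit_mem P this isUnit_one)
  obtain ⟨I, hI⟩ := hc Px
  have hxI : ¬ ∀ r ∈ I, r • x = 0 := fun h => hxPx ((hI x).mpr h)
  push_neg at hxI
  obtain ⟨b, hbI, hbx⟩ := hxI
  set y : M := b • x with hy
  have hyN : y ∈ N := N.smul_mem b hxN
  have hyP : ∀ p ∈ P, p • y = 0 := by
    intro p hp
    have hpx : p • x ∈ Px := Submodule.mem_map.mpr ⟨p, hp, by simp [LinearMap.toSpanSingleton_apply]⟩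
    have := (hI (p • x)).mp hpx b hbI
    calc p • y = b • (p • x) := by rw [hy, smul_comm]
    _ = 0 := this
  -- annihilator of y is exactly P
  have hyann : ∀ r : R, r • y = 0 → r ∈ P := by
    intro r hr
    by_contra hrP
    obtain ⟨s, p, hpP, hsp⟩ := hPmax.exists_inv hrP
    have : y = 0 := by
      calc y = (1 : R) • y := (one_smul R y).symm
      _ = (s * r + p) • y := by rw [hsp]
      _ = s • (r • y) + p • y := by rw [add_smul, mul_smul]
      _ = 0 := by rw [hr, hyP p hpP, smul_zero, add_zero]
    exact hbx this
  refine ⟨Submodule.span R {y}, ⟨?_, ?_⟩, ?_⟩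
  · simpa [Submodule.span_singleton_eq_bot] using hbx
  · intro T hT
    by_contra hTbot
    obtain ⟨z, hzT, hz0⟩ := Submodule.exists_mem_ne_zero_of_ne_bot hTbot
    have hzS : z ∈ Submodule.span R {y} := hT.le hzT
    obtain ⟨r, hrz⟩ := Submodule.mem_span_singleton.mp hzS
    have hrP : r ∉ P := fun h => hz0 (hrz ▸ hyP r h)
    obtain ⟨s, p, hpP, hsp⟩ := hPmax.exists_inv hrP
    have hyT : y ∈ T := by
      have : y = s • z := by
        calc y = (1 : R) • y := (one_smul R y).symm
        _ = (s * r + p) • y := by rw [hsp]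
        _ = s • (r • y) + p • y := by rw [add_smul, mul_smul]
        _ = s • z := by rw [hrz, hyP p hpP, add_zero]
      exact this ▸ T.smul_mem s hzT
    exact hT.ne (le_antisymm hT.le ((Submodule.span_singleton_le_iff_mem y T).mpr hyT))
  · exact (Submodule.span_singleton_le_iff_mem y N).mpr hyN

/-- Every nonzero submodule of a nonzero comultiplication module contains a minimal
submodule; in particular the set of minimal submodules is nonempty. -/
theorem stmt0 {R M : Type*} [CommRing R] [AddCommGroup M] [Module R M]
    [Nontrivial M] (hc : IsComultiplication R M) :
    (∀ N : Submodule R M, N ≠ ⊥ → ∃ S : Submodule R M, IsAtom S ∧ S ≤ N) ∧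
      {S : Submodule R M | IsAtom S}.Nonempty := by
  refine ⟨fun N hN => key_aux hc N hN, ?_⟩
  obtain ⟨S, hS, _⟩ := key_aux hc ⊤ (by exact top_ne_bot)
  exact ⟨S, hS⟩
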